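/- Let Λ be a graph and Λ' a subgraph of Λ. If the quotient graph Λ/Λ' is a forest, then Λ is a strong forest relative to Λ'. -/

import Mathlib

/-- A combinatorial graph (Serre style): edges come with a fixed-point-free
reversal involution; loops and multiple edges are allowed. -/
structure SGraph where
  V : Type
  E : Type
  init : E → V
  bar : E → E
  bar_bar : ∀ e, bar (bar e) = e
  bar_ne : ∀ e, bar e ≠ e

namespace SGraph

variable (G : SGraph)

/-- Terminal vertex of an edge. -/
def term (e : G.E) : G.V := G.init (G.bar e)

/-- Consecutive edges of the list match up. -/
def IsChain (l : List G.E) : Prop :=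
  List.Chain' (fun e f => G.term e = G.init f) l

/-- A cycle: a nonempty closed edge path. -/
def IsCycle (l : List G.E) : Prop :=
  l ≠ [] ∧ G.IsChain l ∧
    ∀ e f, l.head? = some e → l.getLast? = some f → G.term f = G.init e

/-- A reduced cycle: no edge is followed (cyclically) by its reverse. -/
def IsReducedCycle (l : List G.E) : Prop :=
  G.IsCycle l ∧ List.Chain' (fun e f => f ≠ G.bar e) l ∧
    ∀ e f, l.head? = some e → l.getLast? = some f → e ≠ G.bar f

/-- A graph is a forest if it contains no reduced cycle. -/
def IsForestGraph : Prop := ∀ l, ¬ G.IsReducedCycle l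

/-- A subgraph: a set of vertices and a set of edges, closed under reversal,
with endpoints among the chosen vertices. -/
structure Subgraph (G : SGraph) where
  verts : Set G.V
  edges : Set G.E
  bar_mem : ∀ ⦃e⦄, e ∈ edges → G.bar e ∈ edges
  init_mem : ∀ ⦃e⦄, e ∈ edges → G.init e ∈ verts

variable {G}

namespace Subgraph

/-- Subgraph containment. -/
def le (H K : Subgraph G) : Prop := H.verts ⊆ K.verts ∧ H.edges ⊆ K.edges

/-- Intersection of two subgraphs. -/
def inter (H K : Subgraph G) : Subgraph G where
  verts := H.verts ∩ K.verts
  edges := H.edges ∩ K.edges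
  bar_mem := fun _ he => ⟨H.bar_mem he.1, K.bar_mem he.2⟩
  init_mem := fun _ he => ⟨H.init_mem he.1, K.init_mem he.2⟩

/-- All edges of the list lie in the subgraph. -/
def EdgesIn (H : Subgraph G) (l : List G.E) : Prop := ∀ e ∈ l, e ∈ H.edges

/-- A reduced cycle contained in the subgraph. -/
def IsReducedCycleIn (H : Subgraph G) (l : List G.E) : Prop :=
  G.IsReducedCycle l ∧ H.EdgesIn l

/-- A subgraph is a forest if it contains no reduced cycle. -/
def IsForest (H : Subgraph G) : Prop := ∀ l, ¬ H.IsReducedCycleIn l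

/-- Reachability inside a subgraph by edge paths. -/
inductive Reaches (H : Subgraph G) : G.V → G.V → Prop
  | refl (v : G.V) (hv : v ∈ H.verts) : Reaches H v v
  | step (e : G.E) (he : e ∈ H.edges) {q : G.V} (h : Reaches H (G.term e) q) :
      Reaches H (G.init e) q

/-- A subgraph is connected if it is nonempty and any two of its vertices are
joined by an edge path in it. -/
def Connected (H : Subgraph G) : Prop :=
  H.verts.Nonempty ∧ ∀ p ∈ H.verts, ∀ q ∈ H.verts, H.Reaches p q

/-- A tree is a connected forest. -/
def IsTree (H : Subgraph G) : Prop := H.IsForest ∧ H.Connected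

/-- `C` is a connected component of `H`: its vertices form a reachability class
of `H` and its edges are the induced ones. -/
def IsCompOf (C H : Subgraph G) : Prop :=
  ∃ v ∈ H.verts, C.verts = {w | H.Reaches v w} ∧
    C.edges = {e | e ∈ H.edges ∧ G.init e ∈ C.verts}

/-- `H` is a forest relative to `H'`: every reduced cycle of `H` is contained
in `H'`. -/
def ForestRel (H H' : Subgraph G) : Prop :=
  ∀ l, H.IsReducedCycleIn l → H'.EdgesIn l

/-- `H` is a strong forest relative to `H'`: a relative forest such that each
component of `H` meets `H'` in an empty or connected subgraph. -/
def StrongForestRel (H H' : Subgraph G) : Prop :=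
  H.ForestRel H' ∧
    ∀ C : Subgraph G, C.IsCompOf H → (C.inter H').verts = ∅ ∨ (C.inter H').Connected

/-- Euler characteristic: number of vertices minus number of (geometric)
edges; each geometric edge corresponds to a pair `{e, ē}`. -/
noncomputable def eulerChar (H : Subgraph G) : ℤ :=
  (H.verts.ncard : ℤ) - ((H.edges.ncard / 2 : ℕ) : ℤ)

/-- A walk in `H` from `p` to `q`, given as its list of traversed edges. -/
def IsWalk (H : Subgraph G) (p q : G.V) (l : List G.E) : Prop :=
  H.EdgesIn l ∧ G.IsChain l ∧
    (∀ e, l.head? = some e → G.init e = p) ∧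
    (∀ e, l.getLast? = some e → G.term e = q) ∧
    (l = [] → p = q ∧ p ∈ H.verts)

/-- The weight-0 subgraph of a zero/one-weighted subgraph: all of its vertices
together with its edges of weight 0. -/
def zeroSub (H : Subgraph G) (ω : G.E → ℕ) (hbar : ∀ e, ω (G.bar e) = ω e) :
    Subgraph G where
  verts := H.verts
  edges := {e | e ∈ H.edges ∧ ω e = 0}
  bar_mem := fun e he => ⟨H.bar_mem he.1, by rw [hbar]; exact he.2⟩
  init_mem := fun _ he => H.init_mem he.1

end Subgraph

/-- The full subgraph of a graph. -/
def full (G : SGraph) : Subgraph G where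
  verts := Set.univ
  edges := Set.univ
  bar_mem := fun _ _ => Set.mem_univ _
  init_mem := fun _ _ => Set.mem_univ _

open Classical in
/-- The quotient graph `G/H'` obtained by identifying the subgraph `H'` to a
single vertex `∗` (represented by `none`): its vertices are the vertices of
`G` not in `H'` together with `∗`; its edges are the edges of `G` not in `H'`,
with endpoints in `H'` replaced by `∗`. -/
noncomputable def quot (G : SGraph) (H' : Subgraph G) : SGraph where
  V := Option {v : G.V // v ∉ H'.verts}
  E := {e : G.E // e ∉ H'.edges}
  init e := if h : G.init e.1 ∈ H'.verts then none else some ⟨G.init e.1, h⟩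
  bar e := ⟨G.bar e.1, fun hc => e.2 (by simpa [G.bar_bar] using H'.bar_mem hc)⟩
  bar_bar e := Subtype.ext (G.bar_bar e.1)
  bar_ne e := fun hc => G.bar_ne e.1 (congrArg Subtype.val hc)

end SGraph

-- ===================== auxiliary development =====================

namespace SGraph

variable {G : SGraph}

theorem bar_injective (G : SGraph) : Function.Injective G.bar := by
  intro a b h
  have := congrArg G.bar h
  simpa [G.bar_bar] using this

@[simp] theorem term_bar (G : SGraph) (e : G.E) : G.term (G.bar e) = G.init e := by
  simp [term, G.bar_bar]

theorem init_bar (G : SGraph) (e : G.E) : G.init (G.bar e) = G.term e := rfl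

theorem Subgraph.term_mem {H : Subgraph G} {e : G.E} (he : e ∈ H.edges) :
    G.term e ∈ H.verts :=
  H.init_mem (H.bar_mem he)

/-- Walks in a subgraph, as an inductive predicate indexed by the edge list. -/
inductive Wk (H : Subgraph G) : G.V → G.V → List G.E → Prop
  | nil (v) (hv : v ∈ H.verts) : Wk H v v []
  | cons (e) (he : e ∈ H.edges) {q : G.V} {l : List G.E}
      (h : Wk H (G.term e) q l) : Wk H (G.init e) q (e :: l)

namespace Wk

variable {H : Subgraph G}

theorem start_mem {p q : G.V} {l} (h : Wk H p q l) : p ∈ H.verts := by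
  cases h with
  | nil v hv => exact hv
  | cons e he h => exact H.init_mem he

theorem nil_elim {p q : G.V} (h : Wk H p q []) : p = q := by
  cases h; rfl

theorem cons_elim {p q : G.V} {e l} (h : Wk H p q (e :: l)) :
    p = G.init e ∧ e ∈ H.edges ∧ Wk H (G.term e) q l := by
  cases h with
  | cons e he h => exact ⟨rfl, he, h⟩

theorem append {p x q : G.V} {a b} (h1 : Wk H p x a) (h2 : Wk H x q b) :
    Wk H p q (a ++ b) := by
  induction h1 with
  | nil v hv => exact h2
  | cons e he h ih => exact .cons e he (ih h2)

theorem append_split {a b : List G.E} {p q : G.V} (h : Wk H p q (a ++ b)) :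
    ∃ x, Wk H p x a ∧ Wk H x q b := by
  induction a generalizing p with
  | nil => exact ⟨p, .nil p h.start_mem, h⟩
  | cons e t ih =>
    obtain ⟨rfl, he, h'⟩ := h.cons_elim
    obtain ⟨x, h1, h2⟩ := ih h'
    exact ⟨x, .cons e he h1, h2⟩

theorem getLast_term : ∀ {l : List G.E} {p q f}, Wk H p q l →
    l.getLast? = some f → G.term f = q := by
  intro l
  induction l with
  | nil => intro p q f _ hf; simp at hf
  | cons e t ih =>
    intro p q f h hf
    obtain ⟨rfl, he, h'⟩ := h.cons_elim
    cases t with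
    | nil =>
      simp at hf
      subst hf
      exact h'.nil_elim
    | cons g t' =>
      rw [List.getLast?_cons_cons] at hf
      exact ih h' hf

theorem chain : ∀ {l : List G.E} {p q}, Wk H p q l → G.IsChain l := by
  intro l
  induction l with
  | nil => intro p q _; exact List.isChain_nil
  | cons e t ih =>
    intro p q h
    obtain ⟨rfl, he, h'⟩ := h.cons_elim
    cases t with
    | nil => exact List.isChain_singleton _
    | cons f t' =>
      exact List.isChain_cons_cons.2 ⟨h'.cons_elim.1, ih h'⟩

end Wk

/-- Build a walk (in a subgraph with no constraints, e.g. `full`) from a chain. -/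
theorem wk_of_chain {H : Subgraph G} (hHe : ∀ e : G.E, e ∈ H.edges)
    (hHv : ∀ v : G.V, v ∈ H.verts) :
    ∀ {l : List G.E} {e f}, G.IsChain l → l.head? = some e → l.getLast? = some f →
      Wk H (G.init e) (G.term f) l := by
  intro l
  induction l with
  | nil => intro e f _ he; simp at he
  | cons a t ih =>
    intro e f hch he hf
    obtain rfl : a = e := by simpa using he
    cases t with
    | nil =>
      obtain rfl : a = f := by simpa using hf
      exact .cons a (hHe a) (.nil _ (hHv _))
    | cons b t' =>
      rw [List.getLast?_cons_cons] at hf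
      have h1 := (List.isChain_cons_cons.1 hch).1
      have h2 := (List.isChain_cons_cons.1 hch).2
      have := ih h2 rfl hf
      rw [← h1] at this
      exact .cons a (hHe a) this

theorem Subgraph.Reaches.snoc_aux {H : Subgraph G} :
    ∀ {p x : G.V}, H.Reaches p x → ∀ {e : G.E}, x = G.init e → e ∈ H.edges →
      H.Reaches p (G.term e) := by
  intro p x h
  induction h with
  | refl v hv =>
    intro e hx he
    rw [hx]
    exact .step e he (.refl _ (Subgraph.term_mem he))
  | step f hf h ih =>
    intro e hx he
    exact .step f hf (ih hx he)

theorem Subgraph.Reaches.snoc {H : Subgraph G} {p : G.V} {e : G.E}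
    (h : H.Reaches p (G.init e)) (he : e ∈ H.edges) : H.Reaches p (G.term e) :=
  h.snoc_aux rfl he

theorem Subgraph.Reaches.trans {H : Subgraph G} {p q r : G.V}
    (h1 : H.Reaches p q) (h2 : H.Reaches q r) : H.Reaches p r := by
  induction h1 with
  | refl v hv => exact h2
  | step f hf h ih => exact .step f hf (ih h2)

theorem Subgraph.Reaches.symm {H : Subgraph G} {p q : G.V}
    (h : H.Reaches p q) : H.Reaches q p := by
  induction h with
  | refl v hv => exact .refl v hv
  | step e he h ih =>
    have := ih.snoc (e := G.bar e) (H.bar_mem he)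
    rwa [G.term_bar] at this

theorem Subgraph.Reaches.to_wk {H : Subgraph G} {p q : G.V}
    (h : H.Reaches p q) : ∃ l, Wk H p q l := by
  induction h with
  | refl v hv => exact ⟨[], .nil v hv⟩
  | step e he h ih =>
    obtain ⟨l, hl⟩ := ih
    exact ⟨e :: l, .cons e he hl⟩

end SGraph

namespace SGraph

variable {G : SGraph}

open Classical in
/-- Projection of vertices to the quotient graph. -/
noncomputable def pr (Λ' : Subgraph G) : G.V → (G.quot Λ').V := fun v =>
  if h : v ∈ Λ'.verts then none else some ⟨v, h⟩

theorem pr_eq_none {Λ' : Subgraph G} {v : G.V} (hv : v ∈ Λ'.verts) :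
    pr Λ' v = none := dif_pos hv

theorem quot_init (Λ' : Subgraph G) (e : G.E) (he : e ∉ Λ'.edges) :
    (G.quot Λ').init ⟨e, he⟩ = pr Λ' (G.init e) := rfl

theorem quot_term (Λ' : Subgraph G) (e : G.E) (he : e ∉ Λ'.edges) :
    (G.quot Λ').term ⟨e, he⟩ = pr Λ' (G.term e) := rfl

open Classical in
/-- The induced edge word of a walk in the quotient graph. -/
noncomputable def Fm (Λ' : Subgraph G) : List G.E → List (G.quot Λ').E :=
  List.filterMap (fun e => if he : e ∈ Λ'.edges then none else some ⟨e, he⟩)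

theorem Fm_nil (Λ' : Subgraph G) : Fm Λ' [] = [] := rfl

theorem Fm_cons_mem (Λ' : Subgraph G) {e : G.E} (he : e ∈ Λ'.edges) (l : List G.E) :
    Fm Λ' (e :: l) = Fm Λ' l := by
  simp [Fm, List.filterMap_cons, dif_pos he]

theorem Fm_cons_not_mem (Λ' : Subgraph G) {e : G.E} (he : e ∉ Λ'.edges) (l : List G.E) :
    Fm Λ' (e :: l) = ⟨e, he⟩ :: Fm Λ' l := by
  simp [Fm, List.filterMap_cons, dif_neg he]

theorem Fm_eq_nil (Λ' : Subgraph G) : ∀ {l : List G.E}, Fm Λ' l = [] →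
    ∀ e ∈ l, e ∈ Λ'.edges := by
  intro l
  induction l with
  | nil => intro _ e he; simp at he
  | cons a t ih =>
    intro h e he
    by_cases ha : a ∈ Λ'.edges
    · rw [Fm_cons_mem Λ' ha] at h
      rcases List.mem_cons.mp he with rfl | hm
      · exact ha
      · exact ih h e hm
    · rw [Fm_cons_not_mem Λ' ha] at h
      simp at h

theorem Fm_ne_nil (Λ' : Subgraph G) {l : List G.E} {e : G.E}
    (hel : e ∈ l) (he : e ∉ Λ'.edges) : Fm Λ' l ≠ [] :=
  fun h => he (Fm_eq_nil Λ' h e hel)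

/-- A walk in `G` induces a walk in the quotient graph. -/
theorem wk_quot (Λ' : Subgraph G) : ∀ {l : List G.E} {p q : G.V},
    Wk (full G) p q l →
    Wk (full (G.quot Λ')) (pr Λ' p) (pr Λ' q) (Fm Λ' l) := by
  intro l p q h
  induction h with
  | nil v hv => exact .nil _ (Set.mem_univ _)
  | cons e he h ih =>
    by_cases heΛ : e ∈ Λ'.edges
    · rw [Fm_cons_mem Λ' heΛ]
      have h1 : pr Λ' (G.init e) = none := pr_eq_none (Λ'.init_mem heΛ)
      have h2 : pr Λ' (G.term e) = none := pr_eq_none (Subgraph.term_mem heΛ)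
      rw [h1, ← h2]
      exact ih
    · rw [Fm_cons_not_mem Λ' heΛ]
      have h2 : pr Λ' (G.init e) = (G.quot Λ').init ⟨e, heΛ⟩ := rfl
      rw [h2]
      refine Wk.cons _ (Set.mem_univ _) ?_
      rw [quot_term Λ' e heΛ]
      exact ih

/-- In a forest, a closed walk that is reduced as a path is empty. -/
theorem forest_lemma {T : SGraph} (hT : T.IsForestGraph) :
    ∀ (n : ℕ) (m : List T.E) (x : T.V), m.length ≤ n →
      Wk (full T) x x m → List.Chain' (fun a b => b ≠ T.bar a) m → m = [] := by
  intro n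
  induction n with
  | zero =>
    intro m x hlen _ _
    exact List.eq_nil_of_length_eq_zero (Nat.le_zero.mp hlen)
  | succ n ih =>
    intro m x hlen hw hred
    match m, hw, hred, hlen with
    | [], _, _, _ => rfl
    | [e], hw, hred, hlen =>
      exfalso
      obtain ⟨hx, _, h'⟩ := hw.cons_elim
      have hcl : T.term e = T.init e := by rw [h'.nil_elim, hx]
      refine hT [e] ⟨⟨by simp, List.isChain_singleton _, ?_⟩, List.isChain_singleton _, ?_⟩
      · intro a b ha hb
        obtain rfl : e = a := by simpa using ha
        obtain rfl : e = b := by simpa using hb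
        exact hcl
      · intro a b ha hb
        obtain rfl : e = a := by simpa using ha
        obtain rfl : e = b := by simpa using hb
        exact (T.bar_ne e).symm
    | e :: g :: t, hw, hred, hlen =>
      exfalso
      obtain ⟨t₀, f, hconc⟩ : ∃ t₀ f, g :: t = t₀ ++ [f] := by
        rcases (g :: t).eq_nil_or_concat with h | ⟨L, b, h⟩
        · simp at h
        · exact ⟨L, b, by simpa [List.concat_eq_append] using h⟩
      by_cases hwrap : e = T.bar f
      · -- strip the matching ends
        rw [hconc] at hw hred hlen
        obtain ⟨hx, _, h'⟩ := hw.cons_elim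
        obtain ⟨y, h1, h2⟩ := h'.append_split
        obtain ⟨hy, _, h3⟩ := h2.cons_elim
        have hf : f = T.bar e := by rw [hwrap, T.bar_bar]
        have hyy : y = T.term e := by rw [hy, hf]; rfl
        rw [hyy] at h1
        have hch : List.Chain' (fun a b => b ≠ T.bar a) t₀ :=
          (List.isChain_append.mp (List.isChain_cons.mp hred).2).1
        have hlen' : t₀.length ≤ n := by
          simp only [List.length_cons, List.length_append, List.length_singleton] at hlen
          omega
        have ht0 := ih t₀ (T.term e) hlen' h1 hch
        subst ht0
        have := (List.isChain_cons.mp hred).1 f (by simp)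
        exact this hf
      · -- m is a reduced cycle: contradiction with forest
        apply hT (e :: g :: t)
        refine ⟨⟨by simp, hw.chain, ?_⟩, hred, ?_⟩
        · intro a b ha hb
          obtain rfl : e = a := by simpa using ha
          have hb' : T.term b = x := hw.getLast_term hb
          rw [hb', hw.cons_elim.1]
        · intro a b ha hb
          obtain rfl : e = a := by simpa using ha
          have : (g :: t).getLast? = some f := by rw [hconc]; exact List.getLast?_concat
          have hb' : b = f := by
            rw [List.getLast?_cons_cons, this] at hb
            exact (Option.some.inj hb).symm
          rw [hb']
          exact hwrap

theorem chain'_not {α : Type _} {R : α → α → Prop} : ∀ {m : List α}, ¬ List.Chain' R m →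
    ∃ u x y w, m = u ++ x :: y :: w ∧ ¬ R x y := by
  intro m
  induction m with
  | nil => intro h; exact absurd List.isChain_nil h
  | cons a t ih =>
    intro h
    match t with
    | [] => exact absurd (List.isChain_singleton a) h
    | b :: t' =>
      by_cases hab : R a b
      · have ht : ¬ List.Chain' R (b :: t') := fun hc => h (List.isChain_cons_cons.2 ⟨hab, hc⟩)
        obtain ⟨u, x, y, w, heq, hxy⟩ := ih ht
        exact ⟨a :: u, x, y, w, by rw [heq]; rfl, hxy⟩
      · exact ⟨[], a, b, t', rfl, hab⟩

theorem Fm_decomp_single (Λ' : Subgraph G) : ∀ {l : List G.E} {x : (G.quot Λ').E}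
    {w : List (G.quot Λ').E}, Fm Λ' l = x :: w → ∃ a c, l = a ++ x.1 :: c := by
  intro l
  induction l with
  | nil => intro x w h; simp [Fm_nil] at h
  | cons e t ih =>
    intro x w h
    by_cases he : e ∈ Λ'.edges
    · rw [Fm_cons_mem Λ' he] at h
      obtain ⟨a, c, rfl⟩ := ih h
      exact ⟨e :: a, c, rfl⟩
    · rw [Fm_cons_not_mem Λ' he] at h
      obtain ⟨hx, -⟩ := List.cons.inj h
      exact ⟨[], t, by rw [← hx]; rfl⟩
      -- note: `rfl` after the rewrite


theorem Fm_decomp_pair (Λ' : Subgraph G) : ∀ {l : List G.E} {u : List (G.quot Λ').E}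
    {x y : (G.quot Λ').E} {w : List (G.quot Λ').E},
    Fm Λ' l = u ++ x :: y :: w → ∃ a b c, l = a ++ x.1 :: b ++ y.1 :: c := by
  intro l
  induction l with
  | nil => intro u x y w h; simp [Fm_nil] at h
  | cons e t ih =>
    intro u x y w h
    by_cases he : e ∈ Λ'.edges
    · rw [Fm_cons_mem Λ' he] at h
      obtain ⟨a, b, c, rfl⟩ := ih h
      exact ⟨e :: a, b, c, rfl⟩
    · rw [Fm_cons_not_mem Λ' he] at h
      cases u with
      | nil =>
        obtain ⟨hx, hw⟩ := List.cons.inj h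
        obtain ⟨b, c, rfl⟩ := Fm_decomp_single Λ' hw
        exact ⟨[], b, c, by rw [← hx]; rfl⟩
      | cons u₀ u' =>
        obtain ⟨-, hw⟩ := List.cons.inj h
        obtain ⟨a, b, c, rfl⟩ := ih hw
        exact ⟨e :: a, b, c, rfl⟩

theorem wk_into_sub (Λ' : Subgraph G) : ∀ {l : List G.E} {p q : G.V},
    Wk (full G) p q l → (∀ e ∈ l, e ∈ Λ'.edges) → q ∈ Λ'.verts → Wk Λ' p q l := by
  intro l p q h
  induction h with
  | nil v hv => intro _ hq; exact .nil v hq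
  | cons e he h ih =>
    intro hall hq
    exact .cons e (hall e (by simp)) (ih (fun f hf => hall f (by simp [hf])) hq)

/-- The key reduction engine: a walk between two vertices of `Λ'` can be replaced
by a walk inside `Λ'`, provided the quotient is a forest. -/
theorem engine (Λ' : Subgraph G) (hT : (G.quot Λ').IsForestGraph) :
    ∀ (n : ℕ) (l : List G.E) (p q : G.V), l.length ≤ n → Wk (full G) p q l →
      p ∈ Λ'.verts → q ∈ Λ'.verts → ∃ l', Wk Λ' p q l' := by
  intro n
  induction n with
  | zero =>
    intro l p q hlen hw hp hq
    obtain rfl : l = [] := List.eq_nil_of_length_eq_zero (Nat.le_zero.mp hlen)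
    obtain rfl : p = q := hw.nil_elim
    exact ⟨[], .nil p hp⟩
  | succ n ih =>
    intro l p q hlen hw hp hq
    by_cases hall : ∀ e ∈ l, e ∈ Λ'.edges
    · exact ⟨l, wk_into_sub Λ' hw hall hq⟩
    · push_neg at hall
      obtain ⟨e₀, he₀l, he₀⟩ := hall
      have hFne : Fm Λ' l ≠ [] := Fm_ne_nil Λ' he₀l he₀
      by_cases hred : List.Chain' (fun a b => b ≠ (G.quot Λ').bar a) (Fm Λ' l)
      · exfalso
        have hq1 : pr Λ' p = none := pr_eq_none hp
        have hq2 : pr Λ' q = none := pr_eq_none hq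
        have hwq := wk_quot Λ' hw
        rw [hq1, hq2] at hwq
        exact hFne (forest_lemma hT (Fm Λ' l).length _ _ le_rfl hwq hred)
      · obtain ⟨u, x, y, w, hFl, hxy⟩ := chain'_not hred
        have hy : y = (G.quot Λ').bar x := not_not.mp hxy
        have hy1 : y.1 = G.bar x.1 := by rw [hy]; rfl
        obtain ⟨a, b, c, hl⟩ := Fm_decomp_pair Λ' hFl
        subst hl
        obtain ⟨t', h12, h4⟩ := hw.append_split
        obtain ⟨s, ha, h2⟩ := h12.append_split
        have hs : s = G.init x.1 := h2.cons_elim.1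
        have h5 := h4.cons_elim.2.2
        have h5' : Wk (full G) s q c := by
          rw [hy1, G.term_bar, ← hs] at h5
          exact h5
        have hac : Wk (full G) p q (a ++ c) := ha.append h5'
        have hlen' : (a ++ c).length ≤ n := by
          simp only [List.length_append, List.length_cons] at hlen ⊢
          omega
        exact ih (a ++ c) p q hlen' hac hp hq

end SGraph

namespace SGraph

variable {G : SGraph}

section maps

variable {A B : SGraph} (φ : A.E → B.E) (ψ : A.V → B.V)

theorem term_map (hinit : ∀ e, B.init (φ e) = ψ (A.init e))
    (hbar : ∀ e, φ (A.bar e) = B.bar (φ e)) (e : A.E) :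
    B.term (φ e) = ψ (A.term e) := by
  rw [term, ← hbar, hinit]; rfl

theorem cycle_map (hinit : ∀ e, B.init (φ e) = ψ (A.init e))
    (hbar : ∀ e, φ (A.bar e) = B.bar (φ e)) (hφ : Function.Injective φ)
    {l : List A.E} (h : A.IsReducedCycle l) : B.IsReducedCycle (l.map φ) := by
  obtain ⟨⟨hne, hch, hcl⟩, hred, hwrap⟩ := h
  refine ⟨⟨by simpa using hne, ?_, ?_⟩, ?_, ?_⟩
  · rw [IsChain, List.Chain', List.isChain_map]
    exact hch.imp (fun a b hab => by
      rw [term_map φ ψ hinit hbar, hinit, hab])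
  · intro e f he hf
    rw [List.head?_map] at he
    rw [List.getLast?_map] at hf
    obtain ⟨e₀, he₀, rfl⟩ := Option.map_eq_some_iff.mp he
    obtain ⟨f₀, hf₀, rfl⟩ := Option.map_eq_some_iff.mp hf
    rw [term_map φ ψ hinit hbar, hinit, hcl e₀ f₀ he₀ hf₀]
  · rw [List.Chain', List.isChain_map]
    exact hred.imp (fun a b hab hc => hab (hφ (by rw [hc, hbar])))
  · intro e f he hf
    rw [List.head?_map] at he
    rw [List.getLast?_map] at hf
    obtain ⟨e₀, he₀, rfl⟩ := Option.map_eq_some_iff.mp he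
    obtain ⟨f₀, hf₀, rfl⟩ := Option.map_eq_some_iff.mp hf
    intro hc
    rw [← hbar] at hc
    exact hwrap e₀ f₀ he₀ hf₀ (hφ hc)

theorem cycle_of_map (hinit : ∀ e, B.init (φ e) = ψ (A.init e))
    (hbar : ∀ e, φ (A.bar e) = B.bar (φ e)) (hψ : Function.Injective ψ)
    {l : List A.E} (h : B.IsReducedCycle (l.map φ)) : A.IsReducedCycle l := by
  obtain ⟨⟨hne, hch, hcl⟩, hred, hwrap⟩ := h
  rw [IsChain, List.Chain', List.isChain_map] at hch
  rw [List.Chain', List.isChain_map] at hred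
  refine ⟨⟨by simpa using hne, ?_, ?_⟩, ?_, ?_⟩
  · exact hch.imp (fun a b hab => by
      rw [term_map φ ψ hinit hbar, hinit] at hab
      exact hψ hab)
  · intro e f he hf
    have hcl' := hcl (φ e) (φ f) (by rw [List.head?_map, he]; rfl)
      (by rw [List.getLast?_map, hf]; rfl)
    rw [term_map φ ψ hinit hbar, hinit] at hcl'
    exact hψ hcl'
  · exact hred.imp (fun a b hab hc => hab (by rw [hc, hbar]))
  · intro e f he hf hc
    exact hwrap (φ e) (φ f) (by rw [List.head?_map, he]; rfl)
      (by rw [List.getLast?_map, hf]; rfl) (by rw [hc, hbar])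

end maps

/-- The graph obtained by deleting an edge pair. -/
def eraseG (G : SGraph) (δ : G.E) : SGraph where
  V := G.V
  E := {e : G.E // e ≠ δ ∧ e ≠ G.bar δ}
  init e := G.init e.1
  bar e := ⟨G.bar e.1,
    fun h => e.2.2 (by rw [← G.bar_bar e.1, h]),
    fun h => e.2.1 (G.bar_injective h)⟩
  bar_bar e := Subtype.ext (G.bar_bar e.1)
  bar_ne e := fun h => G.bar_ne e.1 (congrArg Subtype.val h)

/-- The subgraph `Λ'` viewed inside the edge-deleted graph. -/
def Subgraph.eraseSub (Λ' : Subgraph G) (δ : G.E) : Subgraph (G.eraseG δ) where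
  verts := Λ'.verts
  edges := {e | e.1 ∈ Λ'.edges}
  bar_mem := fun e he => Λ'.bar_mem he
  init_mem := fun e he => Λ'.init_mem he

theorem erase_quot_forest (Λ' : Subgraph G) (δ : G.E)
    (h : (G.quot Λ').IsForestGraph) :
    ((G.eraseG δ).quot (Λ'.eraseSub δ)).IsForestGraph := by
  intro m hm
  refine h (m.map (fun x => ⟨x.1.1, x.2⟩)) ?_
  exact cycle_map (A := (G.eraseG δ).quot (Λ'.eraseSub δ)) (B := G.quot Λ')
    (fun x => ⟨x.1.1, x.2⟩) (fun v => v) (fun e => rfl) (fun e => rfl)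
    (fun x y hxy => by
      apply Subtype.ext; apply Subtype.ext
      simpa using congrArg Subtype.val hxy) hm

theorem cycle_erase {δ : G.E} {l : List G.E} (h : G.IsReducedCycle l)
    (hav : ∀ e ∈ l, e ≠ δ ∧ e ≠ G.bar δ) :
    (G.eraseG δ).IsReducedCycle
      (l.pmap (fun e he => (⟨e, he⟩ : (G.eraseG δ).E)) hav) := by
  apply cycle_of_map (A := G.eraseG δ) (B := G) Subtype.val (fun v => v)
    (fun e => rfl) (fun e => rfl) (fun _ _ hh => hh)
  have : (l.pmap (fun e he => (⟨e, he⟩ : (G.eraseG δ).E)) hav).map Subtype.val = l := by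
    rw [List.map_pmap]
    rw [List.pmap_eq_map]
    exact List.map_id l
  exact (congrArg G.IsReducedCycle this).mpr h

theorem chain'_adj {α : Type _} {R : α → α → Prop} {a c : List α} {x y : α}
    (h : List.Chain' R (a ++ x :: y :: c)) : R x y :=
  (List.isChain_cons_cons.1 (List.isChain_append.mp h).2.1).1

/-- A reduced cycle avoids the edges at a vertex with a unique outgoing edge. -/
theorem cycle_avoid {l : List G.E} (hl : G.IsReducedCycle l) {v : G.V} {δ : G.E}
    (hδ : G.init δ = v) (hu : ∀ e : G.E, G.init e = v → e = δ) :
    ∀ f ∈ l, f ≠ δ ∧ f ≠ G.bar δ := by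
  obtain ⟨⟨hne, hch, hcl⟩, hred, hwrap⟩ := hl
  intro f hf
  constructor
  · intro hfd
    rw [hfd] at hf
    obtain ⟨a, c, hlac⟩ := List.append_of_mem hf
    rcases a.eq_nil_or_concat with rfl | ⟨a₀, g, rfl⟩
    · rw [List.nil_append] at hlac
      subst hlac
      cases c with
      | nil =>
        have hclo := hcl δ δ rfl rfl
        have hbδ : G.bar δ = δ := hu (G.bar δ) (by rw [G.init_bar, hclo, hδ])
        exact G.bar_ne δ hbδ
      | cons c₀ c' =>
        obtain ⟨g, hg⟩ : ∃ g, (δ :: c₀ :: c').getLast? = some g :=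
          ⟨_, List.getLast?_eq_getLast (by simp)⟩
        have hwr := hwrap δ g rfl hg
        have hclo := hcl δ g rfl hg
        have : G.bar g = δ := hu (G.bar g) (by rw [G.init_bar, hclo, hδ])
        exact hwr this.symm
    · rw [List.concat_eq_append] at hlac
      have hlac' : l = a₀ ++ (g :: δ :: c) := by rw [hlac]; simp
      subst hlac'
      have h1 : G.term g = G.init δ := chain'_adj (R := fun e f => G.term e = G.init f) hch
      have h2 : δ ≠ G.bar g := chain'_adj (R := fun e f => f ≠ G.bar e) hred
      have : G.bar g = δ := hu (G.bar g) (by rw [G.init_bar, h1, hδ])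
      exact h2 this.symm
  · intro hfd
    rw [hfd] at hf
    obtain ⟨a, c, hlac⟩ := List.append_of_mem hf
    cases c with
    | cons c₀ c' =>
      subst hlac
      have h1 : G.term (G.bar δ) = G.init c₀ := chain'_adj (R := fun e f => G.term e = G.init f) hch
      have h2 : c₀ ≠ G.bar (G.bar δ) := chain'_adj (R := fun e f => f ≠ G.bar e) hred
      rw [G.term_bar] at h1
      have : c₀ = δ := hu c₀ (by rw [← h1, hδ])
      rw [G.bar_bar] at h2
      exact h2 this
    | nil =>
      subst hlac
      obtain ⟨h₀, hh⟩ : ∃ h₀, (a ++ [G.bar δ]).head? = some h₀ := by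
        cases a with
        | nil => exact ⟨G.bar δ, rfl⟩
        | cons a₀ a' => exact ⟨a₀, rfl⟩
      have hlast : (a ++ [G.bar δ]).getLast? = some (G.bar δ) := List.getLast?_concat
      have hclo := hcl h₀ (G.bar δ) hh hlast
      rw [G.term_bar] at hclo
      have hh₀ : h₀ = δ := hu h₀ (by rw [← hclo, hδ])
      have := hwrap h₀ (G.bar δ) hh hlast
      rw [G.bar_bar, hh₀] at this
      exact this rfl

end SGraph

namespace SGraph

variable {G : SGraph}

theorem not_nodup_decomp {α : Type _} : ∀ {l : List α}, ¬ l.Nodup →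
    ∃ (a : List α) (x : α) (b : List α) (c : List α), l = a ++ x :: b ++ x :: c := by
  intro l
  induction l with
  | nil => intro h; exact absurd List.nodup_nil h
  | cons x t ih =>
    intro h
    by_cases hx : x ∈ t
    · obtain ⟨b, c, rfl⟩ := List.append_of_mem hx
      exact ⟨[], x, b, c, by simp⟩
    · have ht : ¬ t.Nodup := fun hnd => h (List.nodup_cons.mpr ⟨hx, hnd⟩)
      obtain ⟨a, y, b, c, rfl⟩ := ih ht
      exact ⟨x :: a, y, b, c, by simp⟩

/-- In a forest, a reduced edge-path has no repeated (directed) edge. -/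
theorem rp_nodup {T : SGraph} (hT : T.IsForestGraph) {m : List T.E}
    (h1 : T.IsChain m) (h2 : List.Chain' (fun a b => b ≠ T.bar a) m) : m.Nodup := by
  by_contra hnd
  obtain ⟨a, x, b, c, rfl⟩ := not_nodup_decomp hnd
  rw [show a ++ x :: b ++ x :: c = a ++ ((x :: b) ++ (x :: c)) by simp] at h1 h2
  have h1' : List.Chain' (fun e f => T.term e = T.init f) ((x :: b) ++ (x :: c)) :=
    (List.isChain_append.mp h1).2.1
  have hs : List.Chain' (fun e f => T.term e = T.init f) (x :: b) :=
    (List.isChain_append.mp h1').1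
  have hj := (List.isChain_append.mp h1').2.2
  have h2' : List.Chain' (fun e f => f ≠ T.bar e) ((x :: b) ++ (x :: c)) :=
    (List.isChain_append.mp h2).2.1
  have hs2 : List.Chain' (fun e f => f ≠ T.bar e) (x :: b) :=
    (List.isChain_append.mp h2').1
  have hgl : (x :: b).getLast? = some ((x :: b).getLast (by simp)) :=
    List.getLast?_eq_getLast (by simp)
  have hterm : T.term ((x :: b).getLast (by simp)) = T.init x := by
    apply hj
    · rw [hgl]; rfl
    · rfl
  have wk := wk_of_chain (H := full T) (fun e => Set.mem_univ e)
    (fun v => Set.mem_univ v) (l := x :: b) hs rfl hgl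
  rw [hterm] at wk
  have := forest_lemma hT (x :: b).length (x :: b) _ le_rfl wk hs2
  simp at this

/-- A finite forest containing an edge has a leaf (in fact two, at distinct
vertices), i.e. a vertex with a unique outgoing edge. -/
theorem exists_leaf (T : SGraph) [Finite T.E] (hT : T.IsForestGraph) (e₀ : T.E) :
    ∃ z₁ z₂ : T.V, z₁ ≠ z₂ ∧
      (∃ d, T.init d = z₁ ∧ ∀ d', T.init d' = z₁ → d' = d) ∧
      (∃ d, T.init d = z₂ ∧ ∀ d', T.init d' = z₂ → d' = d) := by
  classical
  haveI := Fintype.ofFinite T.E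
  set N := Fintype.card T.E with hN
  set P : ℕ → Prop := fun n => ∃ m : List T.E, T.IsChain m ∧
    List.Chain' (fun a b => b ≠ T.bar a) m ∧ m ≠ [] ∧ m.length = n with hP
  have mkP : ∀ (k : ℕ) (m' : List T.E), T.IsChain m' →
      List.Chain' (fun a b => b ≠ T.bar a) m' → m' ≠ [] → m'.length = k → P k := by
    intro k m' a b c d
    rw [hP]
    exact ⟨m', a, b, c, d⟩
  have hbound : ∀ n, P n → n ≤ N := by
    intro n hn
    rw [hP] at hn
    obtain ⟨m, h1, h2, _, rfl⟩ := hn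
    exact (rp_nodup hT h1 h2).length_le_card
  have hP1 : P 1 := mkP 1 [e₀] (List.isChain_singleton _) (List.isChain_singleton _) (by simp) rfl
  have hPn₀ : P (Nat.findGreatest P N) := Nat.findGreatest_spec (hbound 1 hP1) hP1
  rw [hP] at hPn₀
  obtain ⟨m, hch, hred, hne, hlen⟩ := hPn₀
  have hmax : ∀ m' : List T.E, T.IsChain m' →
      List.Chain' (fun a b => b ≠ T.bar a) m' → m' ≠ [] →
      m'.length = Nat.findGreatest P N + 1 → False := by
    intro m' a b c d
    have hle : Nat.findGreatest P N + 1 ≤ N := hbound _ (mkP _ m' a b c d)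
    have := Nat.le_findGreatest hle (mkP _ m' a b c d)
    omega
  have hh : m.head? = some (m.head hne) := List.head?_eq_head hne
  have hlast : m.getLast? = some (m.getLast hne) := List.getLast?_eq_getLast hne
  refine ⟨T.init (m.head hne), T.term (m.getLast hne), ?_, ?_, ?_⟩
  · intro heq
    have wk := wk_of_chain (H := full T) (fun e => Set.mem_univ e)
      (fun v => Set.mem_univ v) hch hh hlast
    rw [← heq] at wk
    exact hne (forest_lemma hT m.length m _ le_rfl wk hred)
  · refine ⟨m.head hne, rfl, ?_⟩
    intro d' hd'
    by_contra hne'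
    apply hmax (T.bar d' :: m)
    · refine List.isChain_cons.2 ⟨?_, hch⟩
      intro y hy
      have hy' : m.head hne = y := by
        rw [Option.mem_def, hh] at hy
        exact Option.some.inj hy
      rw [← hy', T.term_bar, hd']
    · refine List.isChain_cons.2 ⟨?_, hred⟩
      intro y hy
      have hy' : m.head hne = y := by
        rw [Option.mem_def, hh] at hy
        exact Option.some.inj hy
      rw [← hy', T.bar_bar]
      exact fun hc => hne' hc.symm
    · simp
    · simp [hlen, hP]
  · refine ⟨T.bar (m.getLast hne), by rw [T.init_bar], ?_⟩
    intro d' hd'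
    by_contra hne'
    apply hmax (m ++ [d'])
    · refine List.isChain_append.2 ⟨hch, List.isChain_singleton _, ?_⟩
      intro p hp y hy
      have hp' : m.getLast hne = p := by
        rw [Option.mem_def, hlast] at hp
        exact Option.some.inj hp
      have hy' : d' = y := by
        rw [Option.mem_def] at hy
        exact Option.some.inj hy
      rw [← hp', ← hy']
      exact hd'.symm
    · refine List.isChain_append.2 ⟨hred, List.isChain_singleton _, ?_⟩
      intro p hp y hy
      have hp' : m.getLast hne = p := by
        rw [Option.mem_def, hlast] at hp
        exact Option.some.inj hp
      have hy' : d' = y := by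
        rw [Option.mem_def] at hy
        exact Option.some.inj hy
      rw [← hp', ← hy']
      exact fun hc => hne' hc
    · simp
    · simp [hlen, hP]

end SGraph

namespace SGraph

variable {G : SGraph}

/-- Main lemma for part 1, by induction on the number of edges. -/
theorem part1 : ∀ (n : ℕ) (G : SGraph), Finite G.E → ∀ (Λ' : Subgraph G),
    Nat.card G.E ≤ n → (G.quot Λ').IsForestGraph →
    ∀ l, G.IsReducedCycle l → ∀ e ∈ l, e ∈ Λ'.edges := by
  intro n
  induction n with
  | zero =>
    intro G hE Λ' hcard hF l hl e hel
    have h0 : Nat.card G.E = 0 := Nat.le_zero.mp hcard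
    rcases Nat.card_eq_zero.mp h0 with h | h
    · exact h.elim e
    · exact absurd hE (not_finite_iff_infinite.mpr h)
  | succ n ih =>
    intro G hE Λ' hcard hF l hl e hel
    haveI := hE
    by_cases hallΛ : ∀ f : G.E, f ∈ Λ'.edges
    · exact hallΛ e
    · push_neg at hallΛ
      obtain ⟨f₀, hf₀⟩ := hallΛ
      haveI : Finite (G.quot Λ').E := by
        have : Finite {e : G.E // e ∉ Λ'.edges} := Subtype.finite
        exact this
      obtain ⟨z₁, z₂, hz, h₁, h₂⟩ := exists_leaf (G.quot Λ') hF ⟨f₀, hf₀⟩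
      obtain ⟨v, hv, d, hd, hdu⟩ :
          ∃ (v : G.V) (hv : v ∉ Λ'.verts) (d : (G.quot Λ').E),
            (G.quot Λ').init d = some ⟨v, hv⟩ ∧
            ∀ d', (G.quot Λ').init d' = some ⟨v, hv⟩ → d' = d := by
        rcases z₁ with _ | w
        · rcases z₂ with _ | w
          · exact absurd rfl hz
          · obtain ⟨d, hd, hdu⟩ := h₂
            exact ⟨w.1, w.2, d, hd, hdu⟩
        · obtain ⟨d, hd, hdu⟩ := h₁
          exact ⟨w.1, w.2, d, hd, hdu⟩
      have hδv : G.init d.1 = v := by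
        by_cases hm : G.init d.1 ∈ Λ'.verts
        · rw [show (G.quot Λ').init d = none from dif_pos hm] at hd
          exact nomatch hd
        · rw [show (G.quot Λ').init d = some ⟨G.init d.1, hm⟩ from dif_neg hm] at hd
          exact congrArg Subtype.val (Option.some.inj hd)
      have huniq : ∀ e' : G.E, G.init e' = v → e' = d.1 := by
        intro e' he'
        by_cases h' : e' ∈ Λ'.edges
        · exact absurd (he' ▸ Λ'.init_mem h') hv
        · have hm : ¬ G.init e' ∈ Λ'.verts := by rw [he']; exact hv
          have h1 : (G.quot Λ').init ⟨e', h'⟩ = some ⟨v, hv⟩ := by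
            rw [show (G.quot Λ').init ⟨e', h'⟩ = some ⟨G.init e', hm⟩ from dif_neg hm]
            exact congrArg some (Subtype.ext he')
          exact congrArg Subtype.val (hdu ⟨e', h'⟩ h1)
      have hav : ∀ f ∈ l, f ≠ d.1 ∧ f ≠ G.bar d.1 := cycle_avoid hl hδv huniq
      haveI hE' : Finite (G.eraseG d.1).E := by
        have : Finite {e : G.E // e ≠ d.1 ∧ e ≠ G.bar d.1} := Subtype.finite
        exact this
      have hcard' : Nat.card (G.eraseG d.1).E ≤ n := by
        haveI := Fintype.ofFinite G.E
        haveI : DecidablePred (fun e : G.E => e ≠ d.1 ∧ e ≠ G.bar d.1) :=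
          Classical.decPred _
        have hlt : Fintype.card {e : G.E // e ≠ d.1 ∧ e ≠ G.bar d.1} < Fintype.card G.E :=
          Fintype.card_subtype_lt (x := d.1) (by simp)
        have e0 : Nat.card (G.eraseG d.1).E
            = Nat.card {e : G.E // e ≠ d.1 ∧ e ≠ G.bar d.1} := rfl
        have e1 : Nat.card {e : G.E // e ≠ d.1 ∧ e ≠ G.bar d.1}
            = Fintype.card {e : G.E // e ≠ d.1 ∧ e ≠ G.bar d.1} :=
          Nat.card_eq_fintype_card
        have e2 : Nat.card G.E = Fintype.card G.E := Nat.card_eq_fintype_card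
        omega
      have hF' := erase_quot_forest Λ' d.1 hF
      have hl' := cycle_erase hl hav
      exact ih (G.eraseG d.1) hE' (Λ'.eraseSub d.1) hcard' hF' _ hl'
        ⟨e, hav e hel⟩ (List.mem_pmap.mpr ⟨e, hel, rfl⟩)

theorem wk_to_inter {Λ' C : Subgraph G} {v : G.V}
    (hV : C.verts = {w | (full G).Reaches v w})
    (hE : C.edges = {e | e ∈ (full G).edges ∧ G.init e ∈ C.verts}) :
    ∀ {l : List G.E} {p q : G.V}, Wk Λ' p q l → p ∈ C.verts →
      (C.inter Λ').Reaches p q := by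
  intro l p q h
  induction h with
  | nil u hu => intro huC; exact .refl u (Set.mem_inter huC hu)
  | cons e he h ih =>
    intro hiC
    have hterm : G.term e ∈ C.verts := by
      rw [hV] at hiC ⊢
      exact Subgraph.Reaches.snoc hiC (Set.mem_univ e)
    have heC : e ∈ C.edges := by
      rw [hE]
      exact ⟨Set.mem_univ e, hiC⟩
    exact .step e (Set.mem_inter heC he) (ih hterm)

end SGraph

/-- If the quotient graph `Λ/Λ'` is a forest, then `Λ` (here: the
full subgraph of `G`) is a strong forest relative to the subgraph `Λ'`. -/
theorem strong_forest_rel_of_quot_forest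
    (G : SGraph) [Fintype G.V] [Fintype G.E]
    (Λ' : SGraph.Subgraph G)
    (h : (G.quot Λ').IsForestGraph) :
    (G.full).StrongForestRel Λ' := by
  constructor
  · intro l hl e he
    exact SGraph.part1 (Nat.card G.E) G inferInstance Λ' le_rfl h l hl.1 e he
  · intro C hC
    obtain ⟨v, hv, hV, hE⟩ := hC
    by_cases hemp : (C.inter Λ').verts = ∅
    · exact Or.inl hemp
    · refine Or.inr ⟨Set.nonempty_iff_ne_empty.mpr hemp, ?_⟩
      intro p hp q hq
      obtain ⟨hpC, hpΛ⟩ := hp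
      obtain ⟨hqC, hqΛ⟩ := hq
      have hrp : (SGraph.full G).Reaches v p := by rw [hV] at hpC; exact hpC
      have hrq : (SGraph.full G).Reaches v q := by rw [hV] at hqC; exact hqC
      have hpq : (SGraph.full G).Reaches p q := hrp.symm.trans hrq
      obtain ⟨l, hw⟩ := hpq.to_wk
      obtain ⟨l', hw'⟩ := SGraph.engine Λ' h l.length l p q le_rfl hw hpΛ hqΛ
      exact SGraph.wk_to_inter hV hE hw' hpC
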